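/- Under hypotheses (gev) with ρ > 0 and (jsr_λ) with λ < ρ, the system of dilation equations has exactly one solution (F^(0), …, F^(ν−1)) among ν-tuples of continuous functions from [0,1] to ℂ^d satisfying the boundary conditions F^(j)(0) = 0 and F^(j)(1) = V^(j) for 0 ≤ j ≤ ν−1. -/

import Mathlib

open scoped Classical BigOperators
open Filter Asymptotics

attribute [local instance] Matrix.linftyOpNormedAddCommGroup Matrix.linftyOpNormedRing

noncomputable section

/-- `A_w = A_{w_1} ⋯ A_{w_K}` for a word `w` of length `K` over the digit alphabet. -/
def wordProd {B d : ℕ} (A : Fin B → Matrix (Fin d) (Fin d) ℂ) {K : ℕ}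
    (w : Fin K → Fin B) : Matrix (Fin d) (Fin d) ℂ :=
  ((List.ofFn w).map A).prod

namespace Stmt9
open Set Matrix
variable {B d : ℕ}
lemma sum_mulVec' {ι : Type*} (s : Finset ι) (M : ι → Matrix (Fin d) (Fin d) ℂ)
    (v : Fin d → ℂ) : (∑ i ∈ s, M i) *ᵥ v = ∑ i ∈ s, M i *ᵥ v :=
  map_sum (AddMonoidHom.mk' (fun N : Matrix (Fin d) (Fin d) ℂ => N *ᵥ v)
    (fun a b => Matrix.add_mulVec a b v)) M s
lemma wordProd_cons {K : ℕ} (A : Fin B → Matrix (Fin d) (Fin d) ℂ)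
    (s : Fin B) (w : Fin K → Fin B) :
    wordProd A (Fin.cons s w) = A s * wordProd A w := by
  simp [wordProd, List.ofFn_succ, Fin.cons_zero, Fin.cons_succ, Function.comp]
def pt0 : (Set.Icc (0:ℝ) 1) := ⟨0, by norm_num⟩
def pt1 : (Set.Icc (0:ℝ) 1) := ⟨1, by norm_num⟩
def cmap (B : ℕ) (s : Fin B) (p : Set.Icc (0:ℝ) 1) : Set.Icc (0:ℝ) 1 :=
  Set.projIcc 0 1 zero_le_one ((B : ℝ) * ↑p - (s : ℝ))
lemma cmap_of_le {s : Fin B} {p : Set.Icc (0:ℝ) 1} (h : (B:ℝ) * ↑p ≤ s) :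
    cmap B s p = pt0 := by
  rw [cmap, Set.projIcc_of_le_left _ (by linarith)]; rfl
lemma cmap_of_ge {s : Fin B} {p : Set.Icc (0:ℝ) 1} (h : (s:ℝ) + 1 ≤ (B:ℝ) * ↑p) :
    cmap B s p = pt1 := by
  rw [cmap, Set.projIcc_of_right_le _ (by linarith)]; rfl
lemma cmap_of_mem {s : Fin B} {p : Set.Icc (0:ℝ) 1} (h0 : (s:ℝ) ≤ (B:ℝ) * ↑p)
    (h1 : (B:ℝ) * ↑p < (s:ℝ) + 1) :
    cmap B s p = ⟨(B:ℝ) * ↑p - s, by constructor <;> [linarith; linarith]⟩ := by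
  rw [cmap, Set.projIcc_of_mem]
  exact ⟨by linarith, by linarith⟩
lemma cmap_pt0 (s : Fin B) : cmap B s pt0 = pt0 :=
  cmap_of_le (by norm_num [pt0])
lemma cmap_pt1 (s : Fin B) : cmap B s pt1 = pt1 := by
  refine cmap_of_ge ?_
  have : (s : ℕ) + 1 ≤ B := s.isLt
  have : ((s:ℕ) : ℝ) + 1 ≤ (B : ℝ) := by exact_mod_cast this
  simpa [pt1] using this
variable (A : Fin B → Matrix (Fin d) (Fin d) ℂ) (ρ : ℝ) (ω : ℂ)
def FixEq (g Φ : C(Set.Icc (0:ℝ) 1, Fin d → ℂ)) : Prop :=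
  ∀ p, ((ρ:ℂ) * ω) • Φ p = (∑ s : Fin B, (A s) *ᵥ (Φ (cmap B s p))) - g p
def Tmap (g : C(Set.Icc (0:ℝ) 1, Fin d → ℂ)) (Φ : C(Set.Icc (0:ℝ) 1, Fin d → ℂ)) :
    C(Set.Icc (0:ℝ) 1, Fin d → ℂ) :=
  ⟨fun p => ((ρ:ℂ) * ω)⁻¹ • ((∑ s : Fin B, (A s) *ᵥ (Φ (cmap B s p))) - g p), by
    refine Continuous.const_smul (Continuous.sub ?_ g.continuous) (((ρ:ℂ) * ω)⁻¹)
    refine continuous_finset_sum _ fun s _ => ?_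
    exact Continuous.matrix_mulVec continuous_const
      (Φ.continuous.comp (continuous_projIcc.comp
        (((continuous_const.mul continuous_subtype_val).sub continuous_const))))⟩

lemma step (hB : 2 ≤ B) (hρ : 0 < ρ) (hω : ‖ω‖ = 1)
    {lam : ℝ} (hlam : 0 < lam) (hlamρ : lam < ρ) {T : ℕ} (hT : 1 ≤ T)
    (hjsr : ∀ w : Fin T → Fin B, ‖wordProd A w‖ ≤ lam ^ T)
    (W Vj : Fin d → ℂ) (g : C(Set.Icc (0:ℝ) 1, Fin d → ℂ))
    (hg0 : g pt0 = 0) (hg1 : g pt1 = W)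
    (heig : (∑ s, A s) *ᵥ Vj = ((ρ:ℂ) * ω) • Vj + W) :
    ∃! Φ : C(Set.Icc (0:ℝ) 1, Fin d → ℂ),
      (Φ pt0 = 0 ∧ Φ pt1 = Vj) ∧ FixEq A ρ ω g Φ := by
  have hρω : ((ρ:ℂ) * ω) ≠ 0 := by
    apply mul_ne_zero
    · exact_mod_cast hρ.ne'
    · intro h; rw [h] at hω; simp at hω
  have hnormρω : ‖((ρ:ℂ) * ω)‖ = ρ := by
    rw [norm_mul, Complex.norm_real, hω, mul_one, Real.norm_eq_abs, abs_of_pos hρ]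
  set X : Set C(Set.Icc (0:ℝ) 1, Fin d → ℂ) := {Φ | Φ pt0 = 0 ∧ Φ pt1 = Vj} with hXdef
  have hXclosed : IsClosed X := by
    rw [hXdef, Set.setOf_and]
    exact ((isClosed_singleton.preimage (continuous_eval_const pt0)).inter
      (isClosed_singleton.preimage (continuous_eval_const pt1)))
  haveI := hXclosed.completeSpace_coe
  haveI : Nonempty X := ⟨⟨⟨fun p => (↑p : ℝ) • Vj,
      continuous_subtype_val.smul continuous_const⟩, by simp [pt0, pt1], by simp [pt0, pt1]⟩⟩
  have hT0 : ∀ Φ : C(Set.Icc (0:ℝ) 1, Fin d → ℂ), Φ pt0 = 0 → Tmap A ρ ω g Φ pt0 = 0 := by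
    intro Φ h
    simp [Tmap, cmap_pt0, h, hg0, Matrix.mulVec_zero]
  have hT1 : ∀ Φ : C(Set.Icc (0:ℝ) 1, Fin d → ℂ), Φ pt1 = Vj → Tmap A ρ ω g Φ pt1 = Vj := by
    intro Φ h
    have hsum : (∑ s : Fin B, A s *ᵥ Φ (cmap B s pt1)) = ((ρ:ℂ) * ω) • Vj + W := by
      simp only [cmap_pt1, h]; rw [← sum_mulVec', heig]
    show ((ρ:ℂ) * ω)⁻¹ • ((∑ s : Fin B, (A s) *ᵥ (Φ (cmap B s pt1))) - g pt1) = Vj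
    rw [hsum, hg1, add_sub_cancel_right, smul_smul, inv_mul_cancel₀ hρω, one_smul]
  set TX : X → X := fun Φ => ⟨Tmap A ρ ω g Φ.1, hT0 Φ.1 Φ.2.1, hT1 Φ.1 Φ.2.2⟩ with hTXdef
  -- one step difference
  have key : ∀ Φ Ψ : C(Set.Icc (0:ℝ) 1, Fin d → ℂ), Φ pt0 = Ψ pt0 → Φ pt1 = Ψ pt1 →
      ∀ p, ∃ (s : Fin B) (q : Set.Icc (0:ℝ) 1),
      Tmap A ρ ω g Φ p - Tmap A ρ ω g Ψ p = ((ρ:ℂ) * ω)⁻¹ • (A s *ᵥ (Φ q - Ψ q)) := by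
    intro Φ Ψ h0 h1 p
    have hdiff : Tmap A ρ ω g Φ p - Tmap A ρ ω g Ψ p
        = ((ρ:ℂ) * ω)⁻¹ • (∑ s : Fin B, A s *ᵥ (Φ (cmap B s p) - Ψ (cmap B s p))) := by
      show ((ρ:ℂ) * ω)⁻¹ • (_ - g p) - ((ρ:ℂ) * ω)⁻¹ • (_ - g p) = _
      rw [← smul_sub]
      congr 1
      rw [sub_sub_sub_cancel_right, ← Finset.sum_sub_distrib]
      exact Finset.sum_congr rfl fun s _ => (Matrix.mulVec_sub _ _ _).symm
    have hvanish : ∀ s : Fin B, ¬((s:ℝ) < (B:ℝ) * ↑p ∧ (B:ℝ) * ↑p < (s:ℝ) + 1) →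
        Φ (cmap B s p) - Ψ (cmap B s p) = 0 := by
      intro s hs
      rcases le_or_gt ((B:ℝ) * ↑p) (s:ℝ) with h | h
      · rw [cmap_of_le h, h0, sub_self]
      · have : (s:ℝ) + 1 ≤ (B:ℝ) * ↑p := by
          by_contra hc; push_neg at hc; exact hs ⟨h, hc⟩
        rw [cmap_of_ge this, h1, sub_self]
    by_cases hex : ∃ s : Fin B, (s:ℝ) < (B:ℝ) * ↑p ∧ (B:ℝ) * ↑p < (s:ℝ) + 1
    · obtain ⟨s₀, hs₀⟩ := hex
      refine ⟨s₀, cmap B s₀ p, ?_⟩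
      rw [hdiff]
      congr 1
      refine Finset.sum_eq_single s₀ (fun b _ hb => ?_) (by simp)
      have hbmid : ¬((b:ℝ) < (B:ℝ) * ↑p ∧ (B:ℝ) * ↑p < (b:ℝ) + 1) := by
        rintro ⟨hb1, hb2⟩
        apply hb
        have h1' : (b:ℕ) < (s₀:ℕ) + 1 := by exact_mod_cast (by push_cast; linarith :
          ((b:ℕ):ℝ) < ((s₀:ℕ):ℝ) + 1)
        have h2' : (s₀:ℕ) < (b:ℕ) + 1 := by exact_mod_cast (by push_cast; linarith :
          ((s₀:ℕ):ℝ) < ((b:ℕ):ℝ) + 1)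
        exact Fin.ext (by omega)
      rw [hvanish b hbmid, Matrix.mulVec_zero]
    · refine ⟨⟨0, by omega⟩, pt0, ?_⟩
      rw [hdiff, h0, sub_self, Matrix.mulVec_zero, smul_zero]
      have : ∀ s : Fin B, Φ (cmap B s p) - Ψ (cmap B s p) = 0 :=
        fun s => hvanish s (fun hc => hex ⟨s, hc⟩)
      simp [this, Matrix.mulVec_zero]
  -- iterated difference
  have iter : ∀ n : ℕ, ∀ Φ Ψ : X, ∀ p, ∃ (w : Fin n → Fin B) (q : Set.Icc (0:ℝ) 1),
      ((TX^[n] Φ : X) : C(Set.Icc (0:ℝ) 1, Fin d → ℂ)) p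
        - ((TX^[n] Ψ : X) : C(Set.Icc (0:ℝ) 1, Fin d → ℂ)) p
      = (((ρ:ℂ) * ω)⁻¹) ^ n • (wordProd A w *ᵥ
          (((Φ : C(Set.Icc (0:ℝ) 1, Fin d → ℂ))) q
            - ((Ψ : C(Set.Icc (0:ℝ) 1, Fin d → ℂ))) q)) := by
    intro n
    induction n with
    | zero =>
      intro Φ Ψ p
      exact ⟨fun i => i.elim0, p, by simp [wordProd, Matrix.one_mulVec]⟩
    | succ n ih =>
      intro Φ Ψ p
      have h0' : ((TX^[n] Φ : X) : C(Set.Icc (0:ℝ) 1, Fin d → ℂ)) pt0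
          = ((TX^[n] Ψ : X) : C(Set.Icc (0:ℝ) 1, Fin d → ℂ)) pt0 := by
        rw [(TX^[n] Φ).2.1, (TX^[n] Ψ).2.1]
      have h1' : ((TX^[n] Φ : X) : C(Set.Icc (0:ℝ) 1, Fin d → ℂ)) pt1
          = ((TX^[n] Ψ : X) : C(Set.Icc (0:ℝ) 1, Fin d → ℂ)) pt1 := by
        rw [(TX^[n] Φ).2.2, (TX^[n] Ψ).2.2]
      obtain ⟨s, q', heq⟩ := key _ _ h0' h1' p
      obtain ⟨w', q, heq'⟩ := ih Φ Ψ q'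
      refine ⟨Fin.cons s w', q, ?_⟩
      have hiter : ∀ Θ : X, ((TX^[n+1] Θ : X) : C(Set.Icc (0:ℝ) 1, Fin d → ℂ))
          = Tmap A ρ ω g ((TX^[n] Θ : X) : C(Set.Icc (0:ℝ) 1, Fin d → ℂ)) := by
        intro Θ; rw [Function.iterate_succ_apply']
      rw [hiter, hiter, heq, heq', wordProd_cons, ← Matrix.mulVec_mulVec,
        Matrix.mulVec_smul, smul_smul, ← pow_succ']
  -- contraction
  have hlip : ∀ Φ Ψ : X, dist (TX^[T] Φ) (TX^[T] Ψ) ≤ (lam/ρ)^T * dist Φ Ψ := by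
    intro Φ Ψ
    rw [Subtype.dist_eq]
    refine (ContinuousMap.dist_le (by positivity)).2 fun p => ?_
    obtain ⟨w, q, hw⟩ := iter T Φ Ψ p
    rw [dist_eq_norm, hw, norm_smul, norm_pow, norm_inv, hnormρω]
    have hvd : ‖(Φ : C(Set.Icc (0:ℝ) 1, Fin d → ℂ)) q
        - (Ψ : C(Set.Icc (0:ℝ) 1, Fin d → ℂ)) q‖ ≤ dist Φ Ψ := by
      rw [← dist_eq_norm, Subtype.dist_eq]
      exact ContinuousMap.dist_apply_le_dist q
    have h1 : ‖wordProd A w *ᵥ ((Φ : C(Set.Icc (0:ℝ) 1, Fin d → ℂ)) q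
        - (Ψ : C(Set.Icc (0:ℝ) 1, Fin d → ℂ)) q)‖ ≤ lam^T * dist Φ Ψ := by
      refine le_trans (Matrix.linfty_opNorm_mulVec _ _) ?_
      exact mul_le_mul (hjsr w) hvd (norm_nonneg _) (pow_nonneg hlam.le _)
    calc ρ⁻¹ ^ T * ‖wordProd A w *ᵥ _‖ ≤ ρ⁻¹ ^ T * (lam^T * dist Φ Ψ) := by
          exact mul_le_mul_of_nonneg_left h1 (by positivity)
      _ = (lam/ρ)^T * dist Φ Ψ := by rw [div_pow, div_eq_mul_inv, ← inv_pow]; ring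
  have hK1 : (lam/ρ)^T < 1 :=
    pow_lt_one₀ (by positivity) ((div_lt_one hρ).2 hlamρ) (by omega)
  have contr : ContractingWith ⟨(lam/ρ)^T, by positivity⟩ (TX^[T]) := by
    constructor
    · exact_mod_cast hK1
    · exact LipschitzWith.of_dist_le_mul fun Φ Ψ => hlip Φ Ψ
  set y : X := ContractingWith.fixedPoint (TX^[T]) contr with hydef
  have hy : Function.IsFixedPt (TX^[T]) y := contr.fixedPoint_isFixedPt
  have hTy : TX y = y := by
    have h1 : Function.IsFixedPt (TX^[T]) (TX y) := by
      show TX^[T] (TX y) = TX y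
      rw [← Function.iterate_succ_apply, Function.iterate_succ_apply', hy]
    calc TX y = ContractingWith.fixedPoint (TX^[T]) contr := contr.fixedPoint_unique h1
      _ = y := (contr.fixedPoint_unique hy).symm
  have hTmapy : Tmap A ρ ω g (y : C(Set.Icc (0:ℝ) 1, Fin d → ℂ))
      = (y : C(Set.Icc (0:ℝ) 1, Fin d → ℂ)) := congrArg Subtype.val hTy
  refine ⟨(y : C(Set.Icc (0:ℝ) 1, Fin d → ℂ)), ⟨⟨y.2.1, y.2.2⟩, ?_⟩, ?_⟩
  · intro p
    have hp : ((ρ:ℂ) * ω)⁻¹ • ((∑ s : Fin B,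
        (A s) *ᵥ ((y : C(Set.Icc (0:ℝ) 1, Fin d → ℂ)) (cmap B s p))) - g p)
        = (y : C(Set.Icc (0:ℝ) 1, Fin d → ℂ)) p := ContinuousMap.congr_fun hTmapy p
    rw [← hp, smul_smul, mul_inv_cancel₀ hρω, one_smul]
  · rintro Φ' ⟨⟨hb0, hb1⟩, hfix⟩
    have hx' : TX ⟨Φ', hb0, hb1⟩ = ⟨Φ', hb0, hb1⟩ := by
      refine Subtype.ext (ContinuousMap.ext fun p => ?_)
      show ((ρ:ℂ) * ω)⁻¹ • ((∑ s : Fin B, (A s) *ᵥ (Φ' (cmap B s p))) - g p) = Φ' p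
      rw [← hfix p, smul_smul, inv_mul_cancel₀ hρω, one_smul]
    have : (⟨Φ', hb0, hb1⟩ : X) = y :=
      (contr.fixedPoint_unique (Function.IsFixedPt.iterate hx' T))
    exact congrArg Subtype.val this

-- sum splitting
lemma sum_split (Vj : Fin d → ℂ) (Φ : C(Set.Icc (0:ℝ) 1, Fin d → ℂ))
    (hΦ0 : Φ pt0 = 0) (hΦ1 : Φ pt1 = Vj)
    (p : Set.Icc (0:ℝ) 1) (x₁ : Fin B) (hlo : (x₁:ℝ) ≤ (B:ℝ) * ↑p)
    (hhi : (B:ℝ) * ↑p < (x₁:ℝ) + 1) :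
    ∑ s : Fin B, (A s) *ᵥ Φ (cmap B s p)
      = (∑ s ∈ Finset.univ.filter fun s : Fin B => s < x₁, (A s) *ᵥ Vj)
        + (A x₁) *ᵥ Φ (cmap B x₁ p) := by
  rw [← Finset.sum_filter_add_sum_filter_not Finset.univ (fun s : Fin B => s < x₁)]
  congr 1
  · refine Finset.sum_congr rfl fun s hs => ?_
    have hs' : s < x₁ := (Finset.mem_filter.1 hs).2
    have h1 : (s:ℕ) + 1 ≤ (x₁:ℕ) := hs'
    have h2 : ((s:ℕ):ℝ) + 1 ≤ ((x₁:ℕ):ℝ) := by exact_mod_cast h1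
    rw [cmap_of_ge (by linarith), hΦ1]
  · refine Finset.sum_eq_single_of_mem x₁ (by simp) fun b hb hne => ?_
    have hb' : ¬ b < x₁ := (Finset.mem_filter.1 hb).2
    have hlt : x₁ < b := lt_of_le_of_ne (not_lt.1 hb') (Ne.symm hne)
    have h1 : (x₁:ℕ) + 1 ≤ (b:ℕ) := hlt
    have h2 : ((x₁:ℕ):ℝ) + 1 ≤ ((b:ℕ):ℝ) := by exact_mod_cast h1
    rw [cmap_of_le (by linarith), hΦ0, Matrix.mulVec_zero]

/-- recursive construction of the chain of solutions -/
def solAux (hB : 2 ≤ B) (hρ : 0 < ρ) (hω : ‖ω‖ = 1) {lam : ℝ} (hlam : 0 < lam)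
    (hlamρ : lam < ρ) {T : ℕ} (hT : 1 ≤ T)
    (hjsr : ∀ w : Fin T → Fin B, ‖wordProd A w‖ ≤ lam ^ T)
    (ν : ℕ) (Vn : ℕ → Fin d → ℂ)
    (hv0 : (∑ s, A s) *ᵥ Vn 0 = ((ρ:ℂ) * ω) • Vn 0 + 0)
    (hvs : ∀ j : ℕ, j + 1 < ν →
      (∑ s, A s) *ᵥ Vn (j+1) = ((ρ:ℂ) * ω) • Vn (j+1) + Vn j) :
    (j : ℕ) → {Φ : C(Set.Icc (0:ℝ) 1, Fin d → ℂ) // Φ pt0 = 0 ∧ Φ pt1 = Vn j}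
  | 0 =>
    ⟨(step A ρ ω hB hρ hω hlam hlamρ hT hjsr 0 (Vn 0) 0 rfl rfl hv0).exists.choose,
     (step A ρ ω hB hρ hω hlam hlamρ hT hjsr 0 (Vn 0) 0 rfl rfl hv0).exists.choose_spec.1⟩
  | (j+1) =>
    if h : j + 1 < ν then
      ⟨(step A ρ ω hB hρ hω hlam hlamρ hT hjsr (Vn j) (Vn (j+1))
          (solAux hB hρ hω hlam hlamρ hT hjsr ν Vn hv0 hvs j).1
          (solAux hB hρ hω hlam hlamρ hT hjsr ν Vn hv0 hvs j).2.1
          (solAux hB hρ hω hlam hlamρ hT hjsr ν Vn hv0 hvs j).2.2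
          (hvs j h)).exists.choose,
       (step A ρ ω hB hρ hω hlam hlamρ hT hjsr (Vn j) (Vn (j+1))
          (solAux hB hρ hω hlam hlamρ hT hjsr ν Vn hv0 hvs j).1
          (solAux hB hρ hω hlam hlamρ hT hjsr ν Vn hv0 hvs j).2.1
          (solAux hB hρ hω hlam hlamρ hT hjsr ν Vn hv0 hvs j).2.2
          (hvs j h)).exists.choose_spec.1⟩
    else
      ⟨⟨fun p => ((p : ℝ) : ℂ) • Vn (j+1),
        (Continuous.comp Complex.continuous_ofReal continuous_subtype_val).smul
          continuous_const⟩,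
       by simp [pt0, pt1], by simp [pt0, pt1]⟩

lemma solAux_spec_zero (hB : 2 ≤ B) (hρ : 0 < ρ) (hω : ‖ω‖ = 1) {lam : ℝ} (hlam : 0 < lam)
    (hlamρ : lam < ρ) {T : ℕ} (hT : 1 ≤ T)
    (hjsr : ∀ w : Fin T → Fin B, ‖wordProd A w‖ ≤ lam ^ T)
    (ν : ℕ) (Vn : ℕ → Fin d → ℂ)
    (hv0 : (∑ s, A s) *ᵥ Vn 0 = ((ρ:ℂ) * ω) • Vn 0 + 0)
    (hvs : ∀ j : ℕ, j + 1 < ν →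
      (∑ s, A s) *ᵥ Vn (j+1) = ((ρ:ℂ) * ω) • Vn (j+1) + Vn j) :
    FixEq A ρ ω 0 (solAux A ρ ω hB hρ hω hlam hlamρ hT hjsr ν Vn hv0 hvs 0).1 := by
  simp only [solAux]
  exact (step A ρ ω hB hρ hω hlam hlamρ hT hjsr 0 (Vn 0) 0 rfl rfl hv0).exists.choose_spec.2

lemma solAux_spec_succ (hB : 2 ≤ B) (hρ : 0 < ρ) (hω : ‖ω‖ = 1) {lam : ℝ} (hlam : 0 < lam)
    (hlamρ : lam < ρ) {T : ℕ} (hT : 1 ≤ T)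
    (hjsr : ∀ w : Fin T → Fin B, ‖wordProd A w‖ ≤ lam ^ T)
    (ν : ℕ) (Vn : ℕ → Fin d → ℂ)
    (hv0 : (∑ s, A s) *ᵥ Vn 0 = ((ρ:ℂ) * ω) • Vn 0 + 0)
    (hvs : ∀ j : ℕ, j + 1 < ν →
      (∑ s, A s) *ᵥ Vn (j+1) = ((ρ:ℂ) * ω) • Vn (j+1) + Vn j)
    (j : ℕ) (h : j + 1 < ν) :
    FixEq A ρ ω (solAux A ρ ω hB hρ hω hlam hlamρ hT hjsr ν Vn hv0 hvs j).1
      (solAux A ρ ω hB hρ hω hlam hlamρ hT hjsr ν Vn hv0 hvs (j+1)).1 := by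
  have h2 := (step A ρ ω hB hρ hω hlam hlamρ hT hjsr (Vn j) (Vn (j+1))
          (solAux A ρ ω hB hρ hω hlam hlamρ hT hjsr ν Vn hv0 hvs j).1
          (solAux A ρ ω hB hρ hω hlam hlamρ hT hjsr ν Vn hv0 hvs j).2.1
          (solAux A ρ ω hB hρ hω hlam hlamρ hT hjsr ν Vn hv0 hvs j).2.2
          (hvs j h)).exists.choose_spec.2
  simp only [solAux, dif_pos h]
  exact h2
end Stmt9

/-- `(0.w)_B = Σ_{k=1}^K w_k B^{-k}`. -/
def wordVal {B K : ℕ} (w : Fin K → Fin B) : ℝ :=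
  ∑ k : Fin K, (w k : ℝ) / (B : ℝ) ^ ((k : ℕ) + 1)

/-- The running sum `S_K(x) = Σ_{|w|=K, (0.w)_B ≤ x} A_w C`. -/
def runSum {B d : ℕ} (A : Fin B → Matrix (Fin d) (Fin d) ℂ) (C : Fin d → ℂ)
    (K : ℕ) (x : ℝ) : Fin d → ℂ :=
  ∑ w : Fin K → Fin B, if wordVal w ≤ x then (wordProd A w).mulVec C else 0

/-- The basic dilation equation for data `ρ, ω, V`. -/
def DilationEq {B d : ℕ} (A : Fin B → Matrix (Fin d) (Fin d) ℂ) (ρ : ℝ) (ω : ℂ)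
    (V : Fin d → ℂ) (Φ : ℝ → Fin d → ℂ) : Prop :=
  Φ 0 = 0 ∧ Φ 1 = V ∧
    ∀ r : Fin B, ∀ x : ℝ, (r : ℝ) / B ≤ x → x < ((r : ℝ) + 1) / B →
      Φ x = ((ρ : ℂ) * ω)⁻¹ •
        ((∑ s ∈ Finset.univ.filter fun s : Fin B => s < r, (A s).mulVec V) +
          (A r).mulVec (Φ (B * x - r)))

/-- The system of dilation equations associated with a Jordan family
`V^(0), …, V^(ν-1)` (hypothesis (gev)). -/
def SystemDil {B d ν : ℕ} (A : Fin B → Matrix (Fin d) (Fin d) ℂ) (ρ : ℝ) (ω : ℂ)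
    (V : Fin ν → Fin d → ℂ) (F : Fin ν → ℝ → Fin d → ℂ) : Prop :=
  (∀ j, F j 0 = 0) ∧ (∀ j, F j 1 = V j) ∧
    ∀ x : ℝ, 0 ≤ x → x < 1 → ∀ x₁ : Fin B, (x₁ : ℝ) ≤ B * x → B * x < (x₁ : ℝ) + 1 →
      (∀ h0 : 0 < ν,
        ((ρ : ℂ) * ω) • F ⟨0, h0⟩ x =
          (∑ s ∈ Finset.univ.filter fun s : Fin B => s < x₁, (A s).mulVec (V ⟨0, h0⟩)) +
            (A x₁).mulVec (F ⟨0, h0⟩ (B * x - (x₁ : ℝ)))) ∧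
      ∀ j : ℕ, ∀ hj : j + 1 < ν,
        F ⟨j, Nat.lt_of_succ_lt hj⟩ x + ((ρ : ℂ) * ω) • F ⟨j + 1, hj⟩ x =
          (∑ s ∈ Finset.univ.filter fun s : Fin B => s < x₁,
              (A s).mulVec (V ⟨j + 1, hj⟩)) +
            (A x₁).mulVec (F ⟨j + 1, hj⟩ (B * x - (x₁ : ℝ)))

open Matrix

/-- under (gev) and (jsr_λ) with `λ < ρ`, the system of dilation equations
has exactly one continuous solution with the prescribed boundary values. -/
theorem systemDil_existsUnique (B d ν : ℕ) (hB : 2 ≤ B) (hd : 1 ≤ d) (hν : 0 < ν)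
    (A : Fin B → Matrix (Fin d) (Fin d) ℂ)
    (ρ : ℝ) (hρ : 0 < ρ) (ω : ℂ) (hω : ‖ω‖ = 1)
    -- hypothesis (gev)
    (V : Fin ν → Fin d → ℂ) (hind : LinearIndependent ℂ V)
    (hV0 : (∑ r, A r).mulVec (V ⟨0, hν⟩) = ((ρ : ℂ) * ω) • V ⟨0, hν⟩)
    (hVs : ∀ j : ℕ, ∀ hj : j + 1 < ν,
      (∑ r, A r).mulVec (V ⟨j + 1, hj⟩) =
        ((ρ : ℂ) * ω) • V ⟨j + 1, hj⟩ + V ⟨j, Nat.lt_of_succ_lt hj⟩)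
    -- hypothesis (jsr_λ)
    (lam : ℝ) (hlam : 0 < lam) (hlamρ : lam < ρ)
    (hjsr : ∃ T : ℕ, 1 ≤ T ∧ ∀ w : Fin T → Fin B, ‖wordProd A w‖ ≤ lam ^ T) :
    ∃ F : Fin ν → ℝ → Fin d → ℂ,
      (∀ j, ContinuousOn (F j) (Set.Icc 0 1)) ∧ SystemDil A ρ ω V F ∧
        ∀ G : Fin ν → ℝ → Fin d → ℂ, (∀ j, ContinuousOn (G j) (Set.Icc 0 1)) →
          SystemDil A ρ ω V G → ∀ j, Set.EqOn (G j) (F j) (Set.Icc 0 1) := by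
  classical
  obtain ⟨T, hT1, hjsrT⟩ := hjsr
  have hBpos : 0 < B := by omega
  set Vn : ℕ → Fin d → ℂ := fun j => if h : j < ν then V ⟨j, h⟩ else 0 with hVndef
  have hVn : ∀ (j : ℕ) (hj : j < ν), Vn j = V ⟨j, hj⟩ := fun j hj => dif_pos hj
  have hv0' : (∑ s, A s) *ᵥ Vn 0 = ((ρ:ℂ) * ω) • Vn 0 + 0 := by
    rw [hVn 0 hν, add_zero]; exact hV0
  have hvs' : ∀ j : ℕ, j + 1 < ν →
      (∑ s, A s) *ᵥ Vn (j+1) = ((ρ:ℂ) * ω) • Vn (j+1) + Vn j := by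
    intro j hj
    rw [hVn (j+1) hj, hVn j (Nat.lt_of_succ_lt hj)]
    exact hVs j hj
  set sol := Stmt9.solAux A ρ ω hB hρ hω hlam hlamρ hT1 hjsrT ν Vn hv0' hvs' with hsoldef
  set F : Fin ν → ℝ → Fin d → ℂ :=
    fun j x => (sol (j:ℕ)).1 (Set.projIcc 0 1 zero_le_one x) with hFdef
  refine ⟨F, ?_, ⟨?_, ?_, ?_⟩, ?_⟩
  · intro j
    exact ((sol (j:ℕ)).1.continuous.comp continuous_projIcc).continuousOn
  · intro j
    show (sol (j:ℕ)).1 (Set.projIcc 0 1 zero_le_one 0) = 0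
    rw [Set.projIcc_left]
    exact (sol (j:ℕ)).2.1
  · intro j
    show (sol (j:ℕ)).1 (Set.projIcc 0 1 zero_le_one 1) = V j
    rw [Set.projIcc_right]
    refine ((sol (j:ℕ)).2.2).trans ?_
    rw [hVn _ j.isLt]
  · intro x hx0 hx1 x₁ hlo hhi
    set p : Set.Icc (0:ℝ) 1 := ⟨x, hx0, hx1.le⟩ with hpdef
    have hprojx : Set.projIcc (0:ℝ) 1 zero_le_one x = p :=
      Set.projIcc_of_mem _ ⟨hx0, hx1.le⟩
    have hlo' : ((x₁ : ℕ) : ℝ) ≤ (B:ℝ) * (p:ℝ) := hlo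
    have hhi' : (B:ℝ) * (p:ℝ) < ((x₁ : ℕ) : ℝ) + 1 := hhi
    constructor
    · intro h0
      have hfix := Stmt9.solAux_spec_zero A ρ ω hB hρ hω hlam hlamρ hT1 hjsrT ν Vn hv0' hvs' p
      rw [ContinuousMap.zero_apply, sub_zero,
        Stmt9.sum_split A (Vn 0) _ (sol 0).2.1 (sol 0).2.2 p x₁ hlo' hhi'] at hfix
      have hsumV : (∑ s ∈ Finset.univ.filter fun s : Fin B => s < x₁, A s *ᵥ Vn 0)
          = ∑ s ∈ Finset.univ.filter fun s : Fin B => s < x₁, A s *ᵥ V ⟨0, h0⟩ :=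
        Finset.sum_congr rfl fun s _ => by rw [hVn 0 hν]
      show ((ρ:ℂ) * ω) • (sol 0).1 (Set.projIcc 0 1 zero_le_one x) = _
      rw [hprojx, hfix, hsumV]
      rfl
    · intro j hj
      have hj' := Nat.lt_of_succ_lt hj
      have hfix := Stmt9.solAux_spec_succ A ρ ω hB hρ hω hlam hlamρ hT1 hjsrT ν Vn hv0' hvs' j hj p
      rw [Stmt9.sum_split A (Vn (j+1)) _ (sol (j+1)).2.1 (sol (j+1)).2.2 p x₁ hlo' hhi'] at hfix
      have h3 := eq_sub_iff_add_eq.mp hfix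
      have hsumV : (∑ s ∈ Finset.univ.filter fun s : Fin B => s < x₁, A s *ᵥ Vn (j+1))
          = ∑ s ∈ Finset.univ.filter fun s : Fin B => s < x₁, A s *ᵥ V ⟨j+1, hj⟩ :=
        Finset.sum_congr rfl fun s _ => by rw [hVn (j+1) hj]
      show (sol j).1 (Set.projIcc 0 1 zero_le_one x)
          + ((ρ:ℂ) * ω) • (sol (j+1)).1 (Set.projIcc 0 1 zero_le_one x) = _
      rw [hprojx, add_comm, h3, hsumV]
      rfl
  · intro G hGc hGsys
    obtain ⟨hG0, hG1, hGeq⟩ := hGsys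
    have main : ∀ (jn : ℕ) (hj : jn < ν),
        (⟨(Set.Icc (0:ℝ) 1).restrict (G ⟨jn, hj⟩), (hGc ⟨jn, hj⟩).restrict⟩ :
          C(Set.Icc (0:ℝ) 1, Fin d → ℂ)) = (sol jn).1 := by
      intro jn
      induction jn with
      | zero =>
        intro hj
        set GG : C(Set.Icc (0:ℝ) 1, Fin d → ℂ) :=
          ⟨(Set.Icc (0:ℝ) 1).restrict (G ⟨0, hj⟩), (hGc ⟨0, hj⟩).restrict⟩ with hGGdef
        have b0 : GG Stmt9.pt0 = 0 := hG0 ⟨0, hj⟩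
        have b1 : GG Stmt9.pt1 = Vn 0 := by rw [hVn 0 hj]; exact hG1 ⟨0, hj⟩
        have hfixG : Stmt9.FixEq A ρ ω 0 GG := by
          intro p
          rw [ContinuousMap.zero_apply, sub_zero]
          rcases lt_or_eq_of_le p.2.2 with hp | hp
          · have hxnn : (0:ℝ) ≤ (B:ℝ) * (p:ℝ) := by
              have := p.2.1; positivity
            have hBx : (B:ℝ) * (p:ℝ) < B := by
              have h5 : (B:ℝ) * (p:ℝ) < (B:ℝ) * 1 := by
                apply mul_lt_mul_of_pos_left hp
                exact_mod_cast hBpos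
              simpa using h5
            set x₁ : Fin B := ⟨⌊(B:ℝ) * (p:ℝ)⌋₊, (Nat.floor_lt hxnn).2 (by exact_mod_cast hBx)⟩
              with hx₁def
            have hlo : ((x₁ : ℕ) : ℝ) ≤ (B:ℝ) * (p:ℝ) := Nat.floor_le hxnn
            have hhi : (B:ℝ) * (p:ℝ) < ((x₁ : ℕ) : ℝ) + 1 := Nat.lt_floor_add_one _
            have heq := (hGeq (p:ℝ) p.2.1 hp x₁ hlo hhi).1 hj
            rw [Stmt9.sum_split A (Vn 0) GG b0 b1 p x₁ hlo hhi, Stmt9.cmap_of_mem hlo hhi,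
              hVn 0 hj]
            exact heq
          · have hp1 : p = Stmt9.pt1 := Subtype.ext hp
            rw [hp1, b1]
            have h6 : ∑ s : Fin B, A s *ᵥ GG (Stmt9.cmap B s Stmt9.pt1)
                = ((ρ:ℂ) * ω) • Vn 0 := by
              simp only [Stmt9.cmap_pt1, b1]
              rw [← Stmt9.sum_mulVec', hv0', add_zero]
            rw [h6]
        exact ExistsUnique.unique
          (Stmt9.step A ρ ω hB hρ hω hlam hlamρ hT1 hjsrT 0 (Vn 0) 0 rfl rfl hv0')
          ⟨⟨b0, b1⟩, hfixG⟩
          ⟨(sol 0).2, Stmt9.solAux_spec_zero A ρ ω hB hρ hω hlam hlamρ hT1 hjsrT ν Vn hv0' hvs'⟩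
      | succ n ih =>
        intro hj
        have hj' := Nat.lt_of_succ_lt hj
        have ihn := ih hj'
        set GG : C(Set.Icc (0:ℝ) 1, Fin d → ℂ) :=
          ⟨(Set.Icc (0:ℝ) 1).restrict (G ⟨n+1, hj⟩), (hGc ⟨n+1, hj⟩).restrict⟩ with hGGdef
        have b0 : GG Stmt9.pt0 = 0 := hG0 ⟨n+1, hj⟩
        have b1 : GG Stmt9.pt1 = Vn (n+1) := by rw [hVn (n+1) hj]; exact hG1 ⟨n+1, hj⟩
        have hgprev0 : (sol n).1 Stmt9.pt0 = 0 := (sol n).2.1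
        have hgprev1 : (sol n).1 Stmt9.pt1 = Vn n := (sol n).2.2
        have hfixG : Stmt9.FixEq A ρ ω (sol n).1 GG := by
          intro p
          have hgp : (sol n).1 p = G ⟨n, hj'⟩ (p:ℝ) := by
            rw [← ihn]; rfl
          rcases lt_or_eq_of_le p.2.2 with hp | hp
          · have hxnn : (0:ℝ) ≤ (B:ℝ) * (p:ℝ) := by
              have := p.2.1; positivity
            have hBx : (B:ℝ) * (p:ℝ) < B := by
              have h5 : (B:ℝ) * (p:ℝ) < (B:ℝ) * 1 := by
                apply mul_lt_mul_of_pos_left hp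
                exact_mod_cast hBpos
              simpa using h5
            set x₁ : Fin B := ⟨⌊(B:ℝ) * (p:ℝ)⌋₊, (Nat.floor_lt hxnn).2 (by exact_mod_cast hBx)⟩
              with hx₁def
            have hlo : ((x₁ : ℕ) : ℝ) ≤ (B:ℝ) * (p:ℝ) := Nat.floor_le hxnn
            have hhi : (B:ℝ) * (p:ℝ) < ((x₁ : ℕ) : ℝ) + 1 := Nat.lt_floor_add_one _
            have heq := (hGeq (p:ℝ) p.2.1 hp x₁ hlo hhi).2 n hj
            rw [Stmt9.sum_split A (Vn (n+1)) GG b0 b1 p x₁ hlo hhi,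
              Stmt9.cmap_of_mem hlo hhi, hVn (n+1) hj, hgp]
            rw [eq_sub_iff_add_eq, add_comm]
            exact heq
          · have hp1 : p = Stmt9.pt1 := Subtype.ext hp
            rw [hp1, b1, hgprev1]
            have h6 : ∑ s : Fin B, A s *ᵥ GG (Stmt9.cmap B s Stmt9.pt1)
                = ((ρ:ℂ) * ω) • Vn (n+1) + Vn n := by
              simp only [Stmt9.cmap_pt1, b1]
              rw [← Stmt9.sum_mulVec', hvs' n hj]
            rw [h6, add_sub_cancel_right]
        exact ExistsUnique.unique
          (Stmt9.step A ρ ω hB hρ hω hlam hlamρ hT1 hjsrT (Vn n) (Vn (n+1)) (sol n).1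
            hgprev0 hgprev1 (hvs' n hj))
          ⟨⟨b0, b1⟩, hfixG⟩
          ⟨(sol (n+1)).2,
            Stmt9.solAux_spec_succ A ρ ω hB hρ hω hlam hlamρ hT1 hjsrT ν Vn hv0' hvs' n hj⟩
    intro j t ht
    have h2 := ContinuousMap.congr_fun (main (j:ℕ) j.isLt) ⟨t, ht⟩
    simp only [ContinuousMap.coe_mk, Set.restrict_apply, Fin.eta] at h2
    show G j t = (sol (j:ℕ)).1 (Set.projIcc 0 1 zero_le_one t)
    rw [Set.projIcc_of_mem _ ht]
    exact h2
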